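/- Let n ∈ ℕ, 0 < α < n, and p, q ∈ (1, ∞). If there exists a constant A such that ‖I_α f‖_q ≤ A ‖f‖_p for every f ∈ L^p(ℝⁿ), then necessarily 1/q = 1/p − α/n. -/

import Mathlib

open MeasureTheory Set ENNReal

/-- The normalizing constant `γ_n(α) = π^(n/2) 2^α Γ(α/2) / Γ((n-α)/2)` of the Riesz
kernel. -/
noncomputable def rieszGamma (n : ℕ) (α : ℝ) : ℝ :=
  Real.pi ^ ((n : ℝ) / 2) * 2 ^ α * Real.Gamma (α / 2) / Real.Gamma (((n : ℝ) - α) / 2)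

/-- The Riesz potential `I_α f(x) = (1/γ_n(α)) ∫ |x-y|^(α-n) f(y) dy`. -/
noncomputable def rieszPotential (n : ℕ) (α : ℝ) (f : EuclideanSpace ℝ (Fin n) → ℝ)
    (x : EuclideanSpace ℝ (Fin n)) : ℝ :=
  (rieszGamma n α)⁻¹ * ∫ y, ‖x - y‖ ^ (α - (n : ℝ)) * f y

open Metric in
/-- Local integrability of the Riesz kernel. -/
private lemma riesz_kernel_integrableOn {n : ℕ} (hn : 0 < n) {s : ℝ} (hs : -(n : ℝ) < s) (hs0 : s < 0)
    (x : EuclideanSpace ℝ (Fin n)) {R : ℝ} (hR : 0 < R) :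
    IntegrableOn (fun y : EuclideanSpace ℝ (Fin n) => ‖x - y‖ ^ s)
      (closedBall x R) volume := by
  classical
  haveI : Nonempty (Fin n) := ⟨⟨0, hn⟩⟩
  have hmeas : Measurable fun y : EuclideanSpace ℝ (Fin n) => ‖x - y‖ ^ s := by fun_prop
  refine ⟨hmeas.aestronglyMeasurable, ?_⟩
  rw [hasFiniteIntegral_iff_ofReal (Filter.Eventually.of_forall fun y =>
    Real.rpow_nonneg (norm_nonneg _) _)]
  set A : ℕ → Set (EuclideanSpace ℝ (Fin n)) := fun k => closedBall x (R / 2 ^ k) \ closedBall x (R / 2 ^ (k + 1))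
    with hA
  set V : ℝ≥0∞ := volume (ball (0 : EuclideanSpace ℝ (Fin n)) 1) with hV
  have hVtop : V ≠ ∞ := measure_ball_lt_top.ne
  -- the covering
  have hcover : closedBall x R ⊆ {x} ∪ ⋃ k, A k := by
    intro y hy
    rcases eq_or_ne y x with h | h
    · exact Or.inl (by simp [h])
    · have hd : 0 < dist y x := dist_pos.2 h
      have hdR : dist y x ≤ R := mem_closedBall.1 hy
      have hex : ∃ m, R / 2 ^ (m + 1) < dist y x := by
        obtain ⟨m, hm⟩ := pow_unbounded_of_one_lt (R / dist y x) (by norm_num : (1:ℝ) < 2)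
        refine ⟨m, ?_⟩
        have h1 : R / 2 ^ m < dist y x := by
          rw [div_lt_iff₀ (by positivity : (0:ℝ) < 2 ^ m)]
          have := (div_lt_iff₀ hd).1 hm
          linarith
        have h2 : R / 2 ^ (m + 1) ≤ R / 2 ^ m := by
          apply div_le_div_of_nonneg_left hR.le (by positivity)
          exact pow_le_pow_right₀ (by norm_num) (Nat.le_succ m)
        linarith
      refine Or.inr (mem_iUnion.2 ⟨Nat.find hex, ?_, fun hc => absurd (mem_closedBall.1 hc) (not_le.2 (Nat.find_spec hex))⟩)
      · rcases Nat.eq_zero_or_eq_succ_pred (Nat.find hex) with h0 | h0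
        · rw [mem_closedBall, h0]; simpa using hdR
        · rw [mem_closedBall, h0]
          have := Nat.find_min hex (m := Nat.find hex - 1) (by omega)
          push_neg at this
          simpa [Nat.succ_eq_add_one] using this
  -- geometric bound for each annulus
  have hterm : ∀ k, (∫⁻ y in A k, ENNReal.ofReal (‖x - y‖ ^ s) ∂volume)
      ≤ ENNReal.ofReal ((R / 2 ^ (k + 1)) ^ s * (R / 2 ^ k) ^ n) * V := by
    intro k
    have h1 : (∫⁻ y in A k, ENNReal.ofReal (‖x - y‖ ^ s) ∂volume)
        ≤ ∫⁻ _ in A k, ENNReal.ofReal ((R / 2 ^ (k + 1)) ^ s) ∂volume := by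
      refine setLIntegral_mono measurable_const fun y hy => ?_
      apply ENNReal.ofReal_le_ofReal
      have hlt : R / 2 ^ (k + 1) < ‖x - y‖ := by
        have := hy.2
        rw [mem_closedBall, not_le, dist_eq_norm] at this
        rwa [norm_sub_rev]
      exact Real.rpow_le_rpow_of_nonpos (by positivity) hlt.le hs0.le
    refine h1.trans ?_
    rw [setLIntegral_const]
    rw [ENNReal.ofReal_mul (by positivity), mul_assoc]
    gcongr
    calc volume (A k) ≤ volume (closedBall x (R / 2 ^ k)) := measure_mono diff_subset
      _ = ENNReal.ofReal ((R / 2 ^ k) ^ Module.finrank ℝ (EuclideanSpace ℝ (Fin n))) * V :=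
          Measure.addHaar_closedBall _ _ (by positivity)
      _ = ENNReal.ofReal ((R / 2 ^ k) ^ n) * V := by
          rw [show Module.finrank ℝ (EuclideanSpace ℝ (Fin n)) = n from finrank_euclideanSpace_fin]
  -- the geometric series
  set u : ℕ → ℝ := fun k => (R / 2 ^ (k + 1)) ^ s * (R / 2 ^ k) ^ n with hu
  set ρ : ℝ := (1 / 2 : ℝ) ^ s * (1 / 2 : ℝ) ^ (n : ℕ) with hρ
  have hρ0 : 0 ≤ ρ := by positivity
  have hρ1 : ρ < 1 := by
    have : ρ = (1 / 2 : ℝ) ^ (s + n) := by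
      rw [hρ, ← Real.rpow_natCast (1/2 : ℝ) n, ← Real.rpow_add (by norm_num)]
    rw [this]
    exact Real.rpow_lt_one (by norm_num) (by norm_num) (by linarith)
  have hrec : ∀ k, u (k + 1) = ρ * u k := by
    intro k
    have e1 : R / 2 ^ (k + 1 + 1) = (1 / 2 : ℝ) * (R / 2 ^ (k + 1)) := by ring
    have e2 : R / 2 ^ (k + 1) = (1 / 2 : ℝ) * (R / 2 ^ k) := by ring
    rw [hu]
    simp only []
    rw [e1]
    nth_rewrite 2 [e2]
    rw [Real.mul_rpow (by norm_num) (by positivity), mul_pow]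
    ring
  have hgeo : ∀ k, u k = u 0 * ρ ^ k := by
    intro k
    induction k with
    | zero => simp
    | succ m ih => rw [hrec m, ih]; ring
  -- put everything together
  have hsum : (∑' k, ENNReal.ofReal (u k) * V) < ∞ := by
    have h1 : ∀ k, ENNReal.ofReal (u k) * V
        = ENNReal.ofReal (u 0) * V * ENNReal.ofReal ρ ^ k := by
      intro k
      rw [hgeo k, ENNReal.ofReal_mul (by positivity), ENNReal.ofReal_pow hρ0]
      ring
    rw [tsum_congr h1, ENNReal.tsum_mul_left, ENNReal.tsum_geometric]
    apply ENNReal.mul_lt_top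
    · exact ENNReal.mul_lt_top ENNReal.ofReal_lt_top hVtop.lt_top
    · exact ENNReal.inv_lt_top.2 (tsub_pos_of_lt (ENNReal.ofReal_lt_one.2 hρ1))
  calc (∫⁻ y in closedBall x R, ENNReal.ofReal (‖x - y‖ ^ s) ∂volume)
      ≤ ∫⁻ y in ({x} ∪ ⋃ k, A k), ENNReal.ofReal (‖x - y‖ ^ s) ∂volume :=
        lintegral_mono_set hcover
    _ ≤ (∫⁻ y in ({x} : Set (EuclideanSpace ℝ (Fin n))), ENNReal.ofReal (‖x - y‖ ^ s) ∂volume)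
        + ∫⁻ y in ⋃ k, A k, ENNReal.ofReal (‖x - y‖ ^ s) ∂volume :=
        lintegral_union_le _ _ _
    _ ≤ 0 + ∑' k, ENNReal.ofReal (u k) * V := by
        gcongr
        · exact le_of_eq (setLIntegral_measure_zero _ _ (measure_singleton x))
        · exact le_trans (lintegral_iUnion_le _ _) (ENNReal.tsum_le_tsum fun k => hterm k)
    _ < ∞ := by simpa using hsum

/-- **Necessity of the Sobolev exponent.** -/
theorem riesz_potential_exponent_necessary (n : ℕ) (hn : 0 < n) (α p q : ℝ)
    (hα0 : 0 < α) (hαn : α < n) (hp : 1 < p) (hq : 1 < q) (A : ℝ)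
    (hbound : ∀ f : EuclideanSpace ℝ (Fin n) → ℝ, MemLp f (ENNReal.ofReal p) volume →
      eLpNorm (rieszPotential n α f) (ENNReal.ofReal q) volume
        ≤ ENNReal.ofReal A * eLpNorm f (ENNReal.ofReal p) volume) :
    1 / q = 1 / p - α / n := by
  classical
  have hn' : (0:ℝ) < n := by exact_mod_cast hn
  have hγ : 0 < rieszGamma n α := by
    have h1 : 0 < Real.pi ^ ((n:ℝ)/2) := Real.rpow_pos_of_pos Real.pi_pos _
    have h2 : (0:ℝ) < 2 ^ α := Real.rpow_pos_of_pos (by norm_num) _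
    have h3 : 0 < Real.Gamma (α / 2) := Real.Gamma_pos_of_pos (by linarith)
    have h4 : 0 < Real.Gamma (((n:ℝ) - α) / 2) := Real.Gamma_pos_of_pos (by linarith)
    unfold rieszGamma
    positivity
  have hγinv : 0 < (rieszGamma n α)⁻¹ := inv_pos.2 hγ
  set s : ℝ := α - (n:ℝ) with hsdef
  have hs0 : s < 0 := by simp [hsdef]; linarith
  have hsn : -(n:ℝ) < s := by simp [hsdef]; linarith
  set v : ℝ≥0∞ := volume (Metric.ball (0 : EuclideanSpace ℝ (Fin n)) 1) with hv
  have hv0 : v ≠ 0 := (Metric.measure_ball_pos _ _ one_pos).ne'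
  have hvtop : v ≠ ∞ := measure_ball_lt_top.ne
  set vt : ℝ := v.toReal with hvt
  have hvt0 : 0 < vt := ENNReal.toReal_pos hv0 hvtop
  have hq0 : (0:ℝ) < q := by linarith
  have hp0 : (0:ℝ) < p := by linarith
  -- the key inequality for every radius r
  have key : ∀ r : ℝ, 0 < r →
      (rieszGamma n α)⁻¹ * ((2*r) ^ s * (r ^ n * vt)) * (r ^ n * vt) ^ (1/q)
        ≤ |A| * (r ^ n * vt) ^ (1/p) := by
    intro r hr
    set B : Set (EuclideanSpace ℝ (Fin n)) := Metric.closedBall 0 r with hB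
    have hBmeas : MeasurableSet B := measurableSet_closedBall
    have hvolB : volume B = ENNReal.ofReal (r ^ n * vt) := by
      rw [hB, Measure.addHaar_closedBall _ _ hr.le,
        show Module.finrank ℝ (EuclideanSpace ℝ (Fin n)) = n from finrank_euclideanSpace_fin,
        ← hv, ← ENNReal.ofReal_toReal hvtop, ← hvt,
        ← ENNReal.ofReal_mul (by positivity)]
    set f : EuclideanSpace ℝ (Fin n) → ℝ := B.indicator (fun _ => (1:ℝ)) with hf
    have hfmem : MemLp f (ENNReal.ofReal p) volume :=
      memLp_indicator_const _ hBmeas 1 (Or.inr (by rw [hvolB]; exact ENNReal.ofReal_ne_top))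
    set c : ℝ := (rieszGamma n α)⁻¹ * ((2*r) ^ s * (r ^ n * vt)) with hc
    have hc0 : 0 ≤ c := by
      have : (0:ℝ) ≤ (2*r) ^ s := Real.rpow_nonneg (by positivity) _
      positivity
    -- pointwise lower bound on the potential
    have hlow : ∀ x ∈ B, c ≤ rieszPotential n α f x := by
      intro x hx
      have hxr : ‖x‖ ≤ r := by simpa [hB, mem_closedBall_zero_iff] using hx
      have hsub : B ⊆ Metric.closedBall x (2*r) := by
        intro y hy
        have hyr : ‖y‖ ≤ r := by simpa [hB, mem_closedBall_zero_iff] using hy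
        have : dist y x ≤ ‖y‖ + ‖x‖ := by
          rw [dist_eq_norm]; exact (norm_sub_le _ _)
        rw [Metric.mem_closedBall]; linarith
      have hInt : IntegrableOn (fun y => ‖x - y‖ ^ s) B volume :=
        (riesz_kernel_integrableOn hn hsn hs0 x (by positivity : (0:ℝ) < 2*r)).mono_set hsub
      have hIeq : (∫ y, ‖x - y‖ ^ s * f y) = ∫ y in B, ‖x - y‖ ^ s := by
        rw [← integral_indicator hBmeas]
        congr 1
        funext y
        by_cases hy : y ∈ B
        · simp [hf, Set.indicator_of_mem hy]
        · simp [hf, Set.indicator_of_notMem hy]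
      have hmono : (volume B).toReal * (2*r) ^ s ≤ ∫ y in B, ‖x - y‖ ^ s := by
        have hconst : IntegrableOn (fun _ => (2*r) ^ s) B volume :=
          integrableOn_const (by rw [hvolB]; exact ENNReal.ofReal_ne_top)
        have hae : ∀ᵐ y : EuclideanSpace ℝ (Fin n) ∂volume, y ∈ B → (2*r) ^ s ≤ ‖x - y‖ ^ s := by
          have hne : ∀ᵐ y : EuclideanSpace ℝ (Fin n) ∂volume, y ≠ x := by
            haveI : Nonempty (Fin n) := ⟨⟨0, hn⟩⟩
            rw [Filter.eventually_iff, mem_ae_iff]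
            simpa using measure_singleton x
          filter_upwards [hne] with y hyne hyB
          have hyr : ‖y‖ ≤ r := by simpa [hB, mem_closedBall_zero_iff] using hyB
          have hpos : 0 < ‖x - y‖ := by
            rw [norm_pos_iff, sub_ne_zero]; exact fun h => hyne h.symm
          have hle2r : ‖x - y‖ ≤ 2*r := by
            have := norm_sub_le x y; linarith
          exact Real.rpow_le_rpow_of_nonpos hpos hle2r hs0.le
        have := setIntegral_mono_on_ae hconst hInt hBmeas hae
        rwa [setIntegral_const, smul_eq_mul] at this
      have hBtoReal : (volume B).toReal = r ^ n * vt := by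
        rw [hvolB, ENNReal.toReal_ofReal (by positivity)]
      rw [rieszPotential, hIeq]
      rw [hc]
      have : (2*r) ^ s * (r ^ n * vt) ≤ ∫ y in B, ‖x - y‖ ^ s := by
        rw [mul_comm ((2*r) ^ s), ← hBtoReal]; exact hmono
      exact mul_le_mul_of_nonneg_left this hγinv.le
    have hnneg : ∀ x, 0 ≤ rieszPotential n α f x := by
      intro x
      rw [rieszPotential]
      apply mul_nonneg hγinv.le
      apply integral_nonneg
      intro y
      apply mul_nonneg (Real.rpow_nonneg (norm_nonneg _) _)
      by_cases hy : y ∈ B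
      · simp [hf, Set.indicator_of_mem hy]
      · simp [hf, Set.indicator_of_notMem hy]
    -- compare eLpNorms
    have hmono : eLpNorm (B.indicator fun _ => c) (ENNReal.ofReal q) volume
        ≤ eLpNorm (rieszPotential n α f) (ENNReal.ofReal q) volume := by
      apply eLpNorm_mono
      intro x
      by_cases hx : x ∈ B
      · rw [Set.indicator_of_mem hx]
        rw [Real.norm_of_nonneg hc0, Real.norm_of_nonneg (hnneg x)]
        exact hlow x hx
      · rw [Set.indicator_of_notMem hx]; simp
    have hq1 : ENNReal.ofReal q ≠ 0 := (ENNReal.ofReal_pos.2 hq0).ne'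
    have hq2 : ENNReal.ofReal q ≠ ∞ := ENNReal.ofReal_ne_top
    have hp1 : ENNReal.ofReal p ≠ 0 := (ENNReal.ofReal_pos.2 hp0).ne'
    have hp2 : ENNReal.ofReal p ≠ ∞ := ENNReal.ofReal_ne_top
    have hLHS : eLpNorm (B.indicator fun _ => c) (ENNReal.ofReal q) volume
        = ENNReal.ofReal (c * (r ^ n * vt) ^ (1/q)) := by
      rw [eLpNorm_indicator_const hBmeas hq1 hq2, hvolB,
        ENNReal.toReal_ofReal hq0.le,
        ENNReal.ofReal_rpow_of_pos (by positivity),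
        Real.enorm_eq_ofReal hc0,
        ← ENNReal.ofReal_mul' (Real.rpow_nonneg (by positivity) _)]
    have hRHS : eLpNorm f (ENNReal.ofReal p) volume
        = ENNReal.ofReal ((r ^ n * vt) ^ (1/p)) := by
      rw [hf, eLpNorm_indicator_const hBmeas hp1 hp2, hvolB,
        ENNReal.toReal_ofReal hp0.le,
        ENNReal.ofReal_rpow_of_pos (by positivity)]
      simp
    have hchain := (hmono.trans (hbound f hfmem))
    rw [hLHS, hRHS] at hchain
    have hA : ENNReal.ofReal A * ENNReal.ofReal ((r ^ n * vt) ^ (1/p))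
        ≤ ENNReal.ofReal (|A| * (r ^ n * vt) ^ (1/p)) := by
      rw [ENNReal.ofReal_mul' (Real.rpow_nonneg (by positivity) _)]
      gcongr
      exact le_abs_self A
    have := hchain.trans hA
    rw [ENNReal.ofReal_le_ofReal_iff (by positivity)] at this
    calc (rieszGamma n α)⁻¹ * ((2*r) ^ s * (r ^ n * vt)) * (r ^ n * vt) ^ (1/q)
        = c * (r ^ n * vt) ^ (1/q) := by rw [hc]
      _ ≤ |A| * (r ^ n * vt) ^ (1/p) := this
  -- extract the pure power inequality
  set e : ℝ := α + (n:ℝ)/q - (n:ℝ)/p with he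
  set C₁ : ℝ := (rieszGamma n α)⁻¹ * ((2:ℝ) ^ s * vt) * vt ^ (1/q) with hC₁
  set C₂ : ℝ := |A| * vt ^ (1/p) with hC₂
  have hC₁0 : 0 < C₁ := by
    have : (0:ℝ) < (2:ℝ) ^ s := Real.rpow_pos_of_pos (by norm_num) _
    have h2 : (0:ℝ) < vt ^ (1/q) := Real.rpow_pos_of_pos hvt0 _
    positivity
  have hpow : ∀ r : ℝ, 0 < r → r ^ e ≤ C₂ / C₁ := by
    intro r hr
    have h := key r hr
    have e1 : (2*r) ^ s = (2:ℝ) ^ s * r ^ s := Real.mul_rpow (by norm_num) hr.le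
    have e2 : (r ^ n * vt) ^ (1/q) = r ^ ((n:ℝ)/q) * vt ^ (1/q) := by
      rw [Real.mul_rpow (by positivity) hvt0.le, ← Real.rpow_natCast r n,
        ← Real.rpow_mul hr.le]
      ring_nf
    have e3 : (r ^ n * vt) ^ (1/p) = r ^ ((n:ℝ)/p) * vt ^ (1/p) := by
      rw [Real.mul_rpow (by positivity) hvt0.le, ← Real.rpow_natCast r n,
        ← Real.rpow_mul hr.le]
      ring_nf
    rw [e1, e2, e3] at h
    have e4 : r ^ s * r ^ (n:ℕ) = r ^ α := by
      rw [← Real.rpow_natCast r n, ← Real.rpow_add hr]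
      congr 1
      rw [hsdef]; ring
    have e5 : r ^ α * r ^ ((n:ℝ)/q) = r ^ e * r ^ ((n:ℝ)/p) := by
      rw [← Real.rpow_add hr, ← Real.rpow_add hr]
      congr 1
      rw [he]; ring
    have h' : C₁ * (r ^ e * r ^ ((n:ℝ)/p)) ≤ C₂ * r ^ ((n:ℝ)/p) := by
      calc C₁ * (r ^ e * r ^ ((n:ℝ)/p))
          = (rieszGamma n α)⁻¹ * ((2:ℝ) ^ s * r ^ s * (r ^ n * vt))
            * (r ^ ((n:ℝ)/q) * vt ^ (1/q)) := by
            rw [hC₁, ← e5, ← e4]; ring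
        _ ≤ |A| * (r ^ ((n:ℝ)/p) * vt ^ (1/p)) := h
        _ = C₂ * r ^ ((n:ℝ)/p) := by rw [hC₂]; ring
    have hrp : (0:ℝ) < r ^ ((n:ℝ)/p) := Real.rpow_pos_of_pos hr _
    rw [le_div_iff₀ hC₁0]
    refine le_of_mul_le_mul_right ?_ hrp
    calc r ^ e * C₁ * r ^ ((n:ℝ)/p) = C₁ * (r ^ e * r ^ ((n:ℝ)/p)) := by ring
      _ ≤ C₂ * r ^ ((n:ℝ)/p) := h'
  -- conclude e = 0
  have he0 : e = 0 := by
    by_contra hne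
    set K : ℝ := C₂ / C₁ with hK
    have hK1 : (1:ℝ) ≤ K := by
      have := hpow 1 one_pos
      simpa using this
    have hKpos : (0:ℝ) < K + 1 := by linarith
    have hr : (0:ℝ) < (K + 1) ^ (1/e) := Real.rpow_pos_of_pos hKpos _
    have hre : ((K + 1) ^ (1/e)) ^ e = K + 1 := by
      rw [← Real.rpow_mul hKpos.le, one_div, inv_mul_cancel₀ hne, Real.rpow_one]
    have := hpow _ hr
    rw [hre] at this
    linarith
  -- derive the exponent relation
  have hqne : q ≠ 0 := by linarith
  have hpne : p ≠ 0 := by linarith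
  have hnne : (n:ℝ) ≠ 0 := hn'.ne'
  have : α + (n:ℝ)/q - (n:ℝ)/p = 0 := by rw [← he]; exact he0
  field_simp at this ⊢
  nlinarith [this]
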